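/- Let n ≥ 1. For each f : Fin n → Bool, let R_f be the matrix indexed by functions Fin n → Fin d × Fin d with entries R_f[x,y] = ∏_{t} (if f t then Φ else (I − Φ))[x t, y t]. Suppose p : (Fin n → Bool) → ℝ satisfies p f ≥ 0 for all f and p(fun _ => false) = 0 (i.e., the all-(I−Φ) term is excluded), and let N = Σ_f p f • R_f. If the partial transpose N^Γ is positive semidefinite, then p f = 0 for all f (hence N = 0). -/

import Mathlib

open Matrix Kronecker ComplexOrder

/-- Projector onto the maximally entangled state: Φ[(i,j),(k,l)] = 1/d if i=j and k=l. -/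
noncomputable def Phi (d : ℕ) : Matrix (Fin d × Fin d) (Fin d × Fin d) ℂ :=
  fun p q => if p.1 = p.2 ∧ q.1 = q.2 then ((d : ℂ))⁻¹ else 0

/-- Sitewise partial transpose on n pairs of systems:
M^Γ[(p,q),(r,s)] = M[(p,s),(r,q)], identifying x : Fin n → Fin d × Fin d with (x₁, x₂). -/
def ptransN (d n : ℕ) (M : Matrix (Fin n → Fin d × Fin d) (Fin n → Fin d × Fin d) ℂ) :
    Matrix (Fin n → Fin d × Fin d) (Fin n → Fin d × Fin d) ℂ :=
  fun x y => M (fun t => ((x t).1, (y t).2)) (fun t => ((y t).1, (x t).2))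

/-- The tensor product R_f with factor Φ at sites where f is true and I − Φ elsewhere. -/
noncomputable def Rten (d n : ℕ) (f : Fin n → Bool) :
    Matrix (Fin n → Fin d × Fin d) (Fin n → Fin d × Fin d) ℂ :=
  fun x y => ∏ t : Fin n,
    (if f t then Phi d else (1 : Matrix (Fin d × Fin d) (Fin d × Fin d) ℂ) - Phi d) (x t) (y t)

/- ---------- Auxiliary machinery ---------- -/

lemma sum_fn_prod {n : ℕ} {α β : Type*} [Fintype α] [CommSemiring β] (g : Fin n → α → β) :
    ∑ x : Fin n → α, ∏ t, g t (x t) = ∏ t, ∑ a, g t a := by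
  rw [Finset.prod_univ_sum, Fintype.piFinset_univ]

lemma sum_fn_prod2 {n : ℕ} {α β : Type*} [Fintype α] [CommSemiring β] (h : Fin n → α → α → β) :
    ∑ x : Fin n → α, ∑ y : Fin n → α, ∏ t, h t (x t) (y t) = ∏ t, ∑ a, ∑ b, h t a b := by
  have step1 : ∀ x : Fin n → α, ∑ y : Fin n → α, ∏ t, h t (x t) (y t)
      = ∏ t, ∑ b, h t (x t) b := fun x => sum_fn_prod (fun t b => h t (x t) b)
  rw [Finset.sum_congr rfl (fun x _ => step1 x)]
  exact sum_fn_prod (fun t a => ∑ b, h t a b)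

/-- Per-site test vector: symmetric (b = false) or antisymmetric (b = true) combination of
`e_{(i0,i1)}` and `e_{(i1,i0)}`. -/
noncomputable def evec {d : ℕ} (i0 i1 : Fin d) (b : Bool) : Fin d × Fin d → ℂ :=
  fun a => (if a = (i0, i1) then 1 else 0) + (if a = (i1, i0) then (if b then -1 else 1) else 0)

/-- Per-site eigenvalue (times the squared norm 2 of the test vector). -/
noncomputable def muB (d : ℕ) : Bool → Bool → ℝ := fun fb cb =>
  if fb then (if cb then -(2/d) else 2/d) else (if cb then 2+2/d else 2-2/d)

lemma evec_star {d : ℕ} (i0 i1 : Fin d) (b : Bool) (a : Fin d × Fin d) :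
    (starRingEnd ℂ) (evec i0 i1 b a) = evec i0 i1 b a := by
  rcases b <;> simp [evec, apply_ite (starRingEnd ℂ)]

lemma evec_sum2 {d : ℕ} (i0 i1 : Fin d) (cb : Bool) (g : (Fin d × Fin d) → (Fin d × Fin d) → ℂ) :
    ∑ a : Fin d × Fin d, ∑ b : Fin d × Fin d, evec i0 i1 cb a * g a b * evec i0 i1 cb b
      = g (i0,i1) (i0,i1) + (if cb then -1 else 1) * g (i0,i1) (i1,i0)
        + (if cb then -1 else 1) * g (i1,i0) (i0,i1)
        + (if cb then -1 else 1) * (if cb then -1 else 1) * g (i1,i0) (i1,i0) := by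
  rcases cb <;>
    simp only [evec, if_true, if_false, Bool.false_eq_true, add_mul, mul_add, ite_mul, mul_ite,
      one_mul, zero_mul, mul_zero, mul_one, neg_mul, mul_neg,
      Finset.sum_add_distrib, Finset.sum_ite_eq', Finset.mem_univ, if_true, Finset.sum_neg_distrib] <;>
    ring

lemma site_sum {d : ℕ} (hd : 2 ≤ d) (i0 i1 : Fin d) (h01 : i0 ≠ i1) (fb cb : Bool) :
    ∑ a : Fin d × Fin d, ∑ b : Fin d × Fin d,
      (starRingEnd ℂ) (evec i0 i1 cb a) *
        ((if fb then Phi d else 1 - Phi d) (a.1, b.2) (b.1, a.2)) * evec i0 i1 cb b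
      = (muB d fb cb : ℂ) := by
  have hd0 : (d : ℂ) ≠ 0 := by
    simp only [ne_eq, Nat.cast_eq_zero]; omega
  simp only [evec_star]
  rw [evec_sum2 i0 i1 cb (fun a b => (if fb then Phi d else 1 - Phi d) (a.1, b.2) (b.1, a.2))]
  rcases fb <;> rcases cb <;>
    simp [Phi, Matrix.sub_apply, Matrix.one_apply, h01, h01.symm, Prod.ext_iff, muB] <;>
    field_simp <;> ring

/-- The product test vector. -/
noncomputable def vv {d n : ℕ} (i0 i1 : Fin d) (c : Fin n → Bool) :
    (Fin n → Fin d × Fin d) → ℂ :=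
  fun x => ∏ t, evec i0 i1 (c t) (x t)

lemma quad_form {d n : ℕ} (hd : 2 ≤ d) (i0 i1 : Fin d) (h01 : i0 ≠ i1) (c f : Fin n → Bool) :
    star (vv i0 i1 c) ⬝ᵥ (ptransN d n (Rten d n f) *ᵥ vv i0 i1 c)
      = ∏ t, (muB d (f t) (c t) : ℂ) := by
  have expand : star (vv i0 i1 c) ⬝ᵥ (ptransN d n (Rten d n f) *ᵥ vv i0 i1 c)
      = ∑ x : Fin n → Fin d × Fin d, ∑ y : Fin n → Fin d × Fin d, ∏ t,
          ((starRingEnd ℂ) (evec i0 i1 (c t) (x t)) *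
            ((if f t then Phi d else 1 - Phi d) ((x t).1, (y t).2) ((y t).1, (x t).2)) *
            evec i0 i1 (c t) (y t)) := by
    simp only [dotProduct, mulVec, Pi.star_apply, Finset.mul_sum]
    refine Finset.sum_congr rfl fun x _ => Finset.sum_congr rfl fun y _ => ?_
    have h1 : ptransN d n (Rten d n f) x y
        = ∏ t, (if f t then Phi d else 1 - Phi d) ((x t).1, (y t).2) ((y t).1, (x t).2) := rfl
    have h2 : star (vv i0 i1 c x) = ∏ t, (starRingEnd ℂ) (evec i0 i1 (c t) (x t)) := by
      rw [vv, RCLike.star_def, map_prod]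
    rw [h1, h2, vv, ← Finset.prod_mul_distrib, ← Finset.prod_mul_distrib]
    exact Finset.prod_congr rfl fun t _ => (mul_assoc _ _ _).symm
  rw [expand,
    sum_fn_prod2 (fun t a b => (starRingEnd ℂ) (evec i0 i1 (c t) a) *
      ((if f t then Phi d else 1 - Phi d) (a.1, b.2) (b.1, a.2)) * evec i0 i1 (c t) b)]
  exact Finset.prod_congr rfl fun t _ => site_sum hd i0 i1 h01 (f t) (c t)

/-- Dual (inverse-transform) coefficients. -/
noncomputable def BB (d : ℕ) : Bool → Bool → ℝ := fun fb cb =>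
  if fb then (if cb then -((d:ℝ)-1) else (d:ℝ)+1) else 1

lemma musum {d : ℕ} (fb : Bool) : ∑ cb : Bool, muB d fb cb = if fb then 0 else 4 := by
  rcases fb <;> simp [muB, Fintype.sum_bool] <;> ring

lemma orth {d : ℕ} (hd : 2 ≤ d) (fb gb : Bool) :
    ∑ cb : Bool, BB d fb cb * muB d gb cb = if fb = gb then 4 else 0 := by
  have hd0 : (d : ℝ) ≠ 0 := by
    simp only [ne_eq, Nat.cast_eq_zero]; omega
  rcases fb <;> rcases gb
  all_goals simp only [BB, muB, Fintype.sum_bool, Bool.false_eq_true, Bool.true_eq_false, if_true, if_false, reduceIte]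
  all_goals (field_simp; try ring)

/-- If N = Σ_f p f • R_f with p ≥ 0 and the all-(I−Φ) term excluded, and N^Γ is PSD,
then all coefficients vanish (hence N = 0). -/
theorem stmt_4 (d n : ℕ) (hd : 2 ≤ d) (hn : 1 ≤ n)
    (p : (Fin n → Bool) → ℝ) (hp : ∀ f, 0 ≤ p f) (hp0 : p (fun _ => false) = 0)
    (N : Matrix (Fin n → Fin d × Fin d) (Fin n → Fin d × Fin d) ℂ)
    (hN : N = ∑ f : Fin n → Bool, p f • Rten d n f)
    (hpt : (ptransN d n N).PosSemidef) :
    (∀ f : Fin n → Bool, p f = 0) ∧ N = 0 := by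
  have hd0 : (d : ℝ) ≠ 0 := by
    simp only [ne_eq, Nat.cast_eq_zero]; omega
  set i0 : Fin d := ⟨0, by omega⟩ with hi0
  set i1 : Fin d := ⟨1, by omega⟩ with hi1
  have h01 : i0 ≠ i1 := by
    simp [hi0, hi1, Fin.ext_iff]
  -- linearity of the partial transpose
  have hlin : ptransN d n N = ∑ f : Fin n → Bool, p f • ptransN d n (Rten d n f) := by
    rw [hN]; funext x y
    simp [ptransN, Matrix.sum_apply, Matrix.smul_apply]
  -- the real quadratic form
  set q : (Fin n → Bool) → ℝ := fun c => ∑ f, p f * ∏ t, muB d (f t) (c t) with hqdef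
  have hQ : ∀ c : Fin n → Bool,
      star (vv i0 i1 c) ⬝ᵥ (ptransN d n N *ᵥ vv i0 i1 c) = ((q c : ℝ) : ℂ) := by
    intro c
    rw [hlin]
    have sum_mv : (∑ f : Fin n → Bool, p f • ptransN d n (Rten d n f)) *ᵥ vv i0 i1 c
        = ∑ f : Fin n → Bool, (p f • ptransN d n (Rten d n f)) *ᵥ vv i0 i1 c := by
      funext x
      simp only [mulVec, dotProduct, Matrix.sum_apply, Finset.sum_apply, Finset.sum_mul]
      exact Finset.sum_comm
    rw [sum_mv]
    have dp_sum : star (vv i0 i1 c) ⬝ᵥ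
          (∑ f : Fin n → Bool, (p f • ptransN d n (Rten d n f)) *ᵥ vv i0 i1 c)
        = ∑ f : Fin n → Bool,
            star (vv i0 i1 c) ⬝ᵥ ((p f • ptransN d n (Rten d n f)) *ᵥ vv i0 i1 c) := by
      simp only [dotProduct, Finset.sum_apply, Finset.mul_sum]
      exact Finset.sum_comm
    rw [dp_sum]
    have heach : ∀ f : Fin n → Bool,
        star (vv i0 i1 c) ⬝ᵥ ((p f • ptransN d n (Rten d n f)) *ᵥ vv i0 i1 c)
          = ((p f : ℂ)) * ∏ t, (muB d (f t) (c t) : ℂ) := by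
      intro f
      rw [Matrix.smul_mulVec, dotProduct_smul, quad_form hd i0 i1 h01 c f]
      rw [Complex.real_smul]
    rw [Finset.sum_congr rfl fun f _ => heach f]
    simp only [hqdef]
    push_cast
    rfl
  -- nonnegativity of each q c
  have hq0 : ∀ c, 0 ≤ q c := by
    intro c
    have h := hpt.dotProduct_mulVec_nonneg (vv i0 i1 c)
    rw [hQ c] at h
    exact_mod_cast h
  -- the q c sum to zero
  have hsumq : ∑ c : Fin n → Bool, q c = 0 := by
    have swap : ∑ c : Fin n → Bool, q c
        = ∑ f : Fin n → Bool, p f * ∏ t, (if f t then (0:ℝ) else 4) := by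
      simp only [hqdef]
      rw [Finset.sum_comm]
      refine Finset.sum_congr rfl fun f _ => ?_
      rw [← Finset.mul_sum, sum_fn_prod (fun t cb => muB d (f t) cb)]
      congr 1
      exact Finset.prod_congr rfl fun t _ => musum (f t)
    rw [swap]
    refine Finset.sum_eq_zero fun f _ => ?_
    by_cases hf : f = fun _ => false
    · rw [hf, hp0, zero_mul]
    · obtain ⟨t, ht⟩ := Function.ne_iff.mp hf
      have ht' : f t = true := by simpa using ht
      rw [Finset.prod_eq_zero (Finset.mem_univ t) (by simp [ht']), mul_zero]
  have hqz : ∀ c, q c = 0 := by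
    intro c
    exact (Finset.sum_eq_zero_iff_of_nonneg (fun c _ => hq0 c)).mp hsumq c (Finset.mem_univ c)
  -- invert the transform to recover p
  have hpf : ∀ f : Fin n → Bool, p f = 0 := by
    intro f
    have h1 : ∑ c : Fin n → Bool, (∏ t, BB d (f t) (c t)) * q c = 4 ^ n * p f := by
      calc ∑ c : Fin n → Bool, (∏ t, BB d (f t) (c t)) * q c
          = ∑ c : Fin n → Bool, ∑ g : Fin n → Bool,
              p g * ∏ t, (BB d (f t) (c t) * muB d (g t) (c t)) := by
            refine Finset.sum_congr rfl fun c _ => ?_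
            rw [hqdef, Finset.mul_sum]
            refine Finset.sum_congr rfl fun g _ => ?_
            rw [Finset.prod_mul_distrib]
            ring
        _ = ∑ g : Fin n → Bool, p g * ∏ t, (if f t = g t then (4:ℝ) else 0) := by
            rw [Finset.sum_comm]
            refine Finset.sum_congr rfl fun g _ => ?_
            rw [← Finset.mul_sum, sum_fn_prod (fun t cb => BB d (f t) cb * muB d (g t) cb)]
            congr 1
            exact Finset.prod_congr rfl fun t _ => orth hd (f t) (g t)
        _ = 4 ^ n * p f := by
            rw [Finset.sum_eq_single f]
            · simp [mul_comm]
            · intro g _ hg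
              obtain ⟨t, ht⟩ := Function.ne_iff.mp (Ne.symm hg)
              rw [Finset.prod_eq_zero (Finset.mem_univ t) (by simp [ht]), mul_zero]
            · intro h; exact absurd (Finset.mem_univ f) h
    have h2 : ∑ c : Fin n → Bool, (∏ t, BB d (f t) (c t)) * q c = 0 := by
      refine Finset.sum_eq_zero fun c _ => ?_
      rw [hqz c, mul_zero]
    have h3 : (4:ℝ) ^ n * p f = 0 := by rw [← h1, h2]
    have h4 : (4:ℝ) ^ n ≠ 0 := by positivity
    exact (mul_eq_zero.mp h3).resolve_left h4
  refine ⟨hpf, ?_⟩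
  rw [hN]
  exact Finset.sum_eq_zero fun f _ => by rw [hpf f, zero_smul]
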